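/- Let p be a prime and λ = (λ_1, …, λ_n) a partition with n ≥ 1, and let λ̃ = (λ_1 + 1, λ_2, …, λ_n). Then for every integer j ≥ 1: N_j(λ̃; p) = N_{j−1}(λ; p) + p^j N_j(λ'; p). -/

import Mathlib

open AddSubgroup

/-- Number of subgroups of `A` of order `p ^ k`. -/
noncomputable def Np (p : ℕ) (A : Type*) [AddCommGroup A] (k : ℕ) : ℕ :=
  Nat.card {H : AddSubgroup A // Nat.card H = p ^ k}

section congrlem

variable {A B : Type*} [AddCommGroup A] [AddCommGroup B]

lemma card_map_addEquiv (e : A ≃+ B) (H : AddSubgroup A) :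
    Nat.card (H.map e.toAddMonoidHom) = Nat.card H :=
  (Nat.card_congr (H.equivMapOfInjective e.toAddMonoidHom e.injective).toEquiv).symm

lemma map_symm_map (e : A ≃+ B) (H : AddSubgroup A) :
    (H.map e.toAddMonoidHom).map e.symm.toAddMonoidHom = H := by
  rw [AddSubgroup.map_map]
  have : (e.symm.toAddMonoidHom.comp e.toAddMonoidHom) = AddMonoidHom.id A := by
    ext x; simp
  rw [this, AddSubgroup.map_id]

lemma Np_congr (p k : ℕ) (e : A ≃+ B) : Np p A k = Np p B k := by
  apply Nat.card_congr
  refine ⟨fun H => ⟨H.1.map e.toAddMonoidHom, by rw [card_map_addEquiv]; exact H.2⟩,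
    fun H => ⟨H.1.map e.symm.toAddMonoidHom, by rw [card_map_addEquiv]; exact H.2⟩, ?_, ?_⟩
  · intro H; exact Subtype.ext (map_symm_map e H.1)
  · intro H; exact Subtype.ext (by simpa using map_symm_map e.symm H.1)

lemma card_split {α : Type*} [Finite α] (P Q : α → Prop) :
    Nat.card {x // P x} = Nat.card {x // P x ∧ Q x} + Nat.card {x // P x ∧ ¬ Q x} := by
  classical
  rw [← Nat.card_sum]
  apply Nat.card_congr
  exact ((Equiv.sumCompl fun x : {x // P x} => Q x.1).symm.trans
    (Equiv.sumCongr (Equiv.subtypeSubtypeEquivSubtypeInter P Q)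
      (Equiv.subtypeSubtypeEquivSubtypeInter P fun x => ¬ Q x)))

lemma card_sigma_const {I : Type*} [Finite I] {F : I → Type*} [∀ i, Finite (F i)] {c : ℕ}
    (h : ∀ i, Nat.card (F i) = c) : Nat.card (Σ i, F i) = c * Nat.card I := by
  have e : ∀ i, Nonempty (F i ≃ Fin c) := by
    intro i
    have : Fintype (F i) := Fintype.ofFinite _
    exact ⟨Fintype.equivFinOfCardEq (by rw [← Nat.card_eq_fintype_card, h i])⟩
  calc Nat.card (Σ i, F i) = Nat.card (Σ _ : I, Fin c) :=
        Nat.card_congr (Equiv.sigmaCongrRight fun i => (e i).some)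
    _ = Nat.card (I × Fin c) := Nat.card_congr (Equiv.sigmaEquivProd I (Fin c))
    _ = c * Nat.card I := by rw [Nat.card_prod, Nat.card_eq_fintype_card (α := Fin c)]; simp [Nat.mul_comm]

lemma card_comap_of_surjective [Finite A] (φ : A →+ B) (hφ : Function.Surjective φ)
    (L : AddSubgroup B) :
    Nat.card (L.comap φ) = Nat.card φ.ker * Nat.card L := by
  set C := L.comap φ with hC
  let ψ : C →+ L := AddMonoidHom.codRestrict (φ.comp C.subtype) L (fun x => x.2)
  have hψ : Function.Surjective ψ := by
    rintro ⟨l, hl⟩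
    obtain ⟨g, rfl⟩ := hφ l
    exact ⟨⟨g, hl⟩, rfl⟩
  have e1 : (C ⧸ ψ.ker) ≃+ L := QuotientAddGroup.quotientKerEquivOfSurjective ψ hψ
  have hkerle : φ.ker ≤ C := by
    intro x hx
    rw [AddMonoidHom.mem_ker] at hx
    show φ x ∈ L
    rw [hx]; exact zero_mem L
  have hker : ψ.ker = φ.ker.addSubgroupOf C := by
    ext x
    simp only [AddMonoidHom.mem_ker, AddSubgroup.mem_addSubgroupOf, ψ,
      AddMonoidHom.codRestrict_apply, AddMonoidHom.comp_apply, AddSubgroup.coe_subtype,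
      Subtype.ext_iff]
    rfl
  calc Nat.card C = Nat.card (C ⧸ ψ.ker) * Nat.card ψ.ker :=
        AddSubgroup.card_eq_card_quotient_mul_card_addSubgroup ψ.ker
    _ = Nat.card L * Nat.card φ.ker := by
        rw [Nat.card_congr e1.toEquiv, hker,
          Nat.card_congr (AddSubgroup.addSubgroupOfEquivOfLe hkerle).toEquiv]
    _ = Nat.card φ.ker * Nat.card L := mul_comm _ _

end congrlem

section homcount

/-- `m`-torsion of `ZMod N` has `m` elements when `m ∣ N`. -/
lemma card_torsion_zmod (m N : ℕ) (hm : m ∣ N) (hN : N ≠ 0) :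
    Nat.card {x : ZMod N // m • x = 0} = m := by
  haveI : NeZero N := ⟨hN⟩
  have hm0 : m ≠ 0 := by rintro rfl; exact hN (Nat.eq_zero_of_zero_dvd hm)
  set d := N / m with hd
  have hNd : N = m * d := (Nat.mul_div_cancel' hm).symm
  have hd0 : d ≠ 0 := by rintro h; rw [h, Nat.mul_zero] at hNd; exact hN hNd
  set g : ZMod N := ((d : ℕ) : ZMod N) with hg
  have hiff : ∀ x : ZMod N, m • x = 0 ↔ x ∈ AddSubgroup.zmultiples g := by
    intro x
    constructor
    · intro hx
      have hdvd : N ∣ m * x.val := by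
        apply (ZMod.natCast_eq_zero_iff _ _).mp
        push_cast
        rw [ZMod.natCast_val, ZMod.cast_id, ← nsmul_eq_mul]
        exact hx
      have hdx : d ∣ x.val := by
        obtain ⟨c, hc⟩ := hdvd
        refine ⟨c, ?_⟩
        apply Nat.eq_of_mul_eq_mul_left (Nat.pos_of_ne_zero hm0)
        rw [hc, hNd]; ring
      obtain ⟨c, hc⟩ := hdx
      refine ⟨(c : ℤ), ?_⟩
      show (c : ℤ) • g = x
      rw [natCast_zsmul, hg, nsmul_eq_mul, ← Nat.cast_mul, mul_comm c d, ← hc,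
        ZMod.natCast_val, ZMod.cast_id]
    · rintro ⟨k, rfl⟩
      rw [smul_comm]
      have : m • g = 0 := by
        rw [hg, nsmul_eq_mul, ← Nat.cast_mul, ← hNd, ZMod.natCast_self]
      rw [this, smul_zero]
  have e : {x : ZMod N // m • x = 0} ≃ AddSubgroup.zmultiples g :=
    Equiv.subtypeEquivRight hiff
  rw [Nat.card_congr e, Nat.card_zmultiples, hg, ZMod.addOrderOf_coe d hN]
  rw [hNd, Nat.gcd_eq_right ⟨m, mul_comm m d⟩]
  rw [Nat.mul_div_assoc m (dvd_refl d), Nat.div_self (Nat.pos_of_ne_zero hd0), mul_one]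

lemma card_hom_zmod {L : Type*} [AddCommGroup L] [Finite L] (N : ℕ) (hN : N ≠ 0)
    (hL : ∀ x : L, N • x = 0) : Nat.card (L →+ ZMod N) = Nat.card L := by
  classical
  obtain ⟨ι, hι, n, hn, ⟨e⟩⟩ := AddCommGroup.equiv_directSum_zmod_of_finite' L
  haveI := hι
  have hdvd : ∀ i, n i ∣ N := by
    intro i
    have h2 : N • (DirectSum.of (fun i => ZMod (n i)) i (1 : ZMod (n i))) = 0 := by
      have h0 := hL (e.symm (DirectSum.of (fun i => ZMod (n i)) i 1))
      have := congrArg e h0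
      rwa [map_nsmul, AddEquiv.apply_symm_apply, map_zero] at this
    have h3 := congrArg (DFinsupp.evalAddMonoidHom (β := fun i => ZMod (n i)) i) h2
    rw [map_nsmul, map_zero] at h3
    have h4 : (DFinsupp.evalAddMonoidHom (β := fun i => ZMod (n i)) i)
        (DirectSum.of (fun i => ZMod (n i)) i 1) = 1 := DirectSum.of_eq_same i 1
    rw [h4] at h3
    have h5 := addOrderOf_dvd_of_nsmul_eq_zero h3
    rwa [ZMod.addOrderOf_one] at h5
  have E1 : (L →+ ZMod N) ≃ ((DirectSum ι fun i => ZMod (n i)) →+ ZMod N) := by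
    refine ⟨fun f => f.comp e.symm.toAddMonoidHom, fun f => f.comp e.toAddMonoidHom, ?_, ?_⟩
    · intro f; ext x; simp
    · intro f; ext x; simp
  have E2 : ((DirectSum ι fun i => ZMod (n i)) →+ ZMod N) ≃ ∀ i, (ZMod (n i) →+ ZMod N) := by
    refine ⟨fun F i => F.comp (DirectSum.of (fun i => ZMod (n i)) i),
      fun g => DirectSum.toAddMonoid g, ?_, ?_⟩
    · intro F
      refine DirectSum.addHom_ext fun i x => ?_
      rw [DirectSum.toAddMonoid_of]
      rfl
    · intro g
      funext i
      ext x
      exact DirectSum.toAddMonoid_of _ _ _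
  have E3 : ∀ i, Nat.card (ZMod (n i) →+ ZMod N) = n i := by
    intro i
    have e1 : (ZMod (n i) →+ ZMod N) ≃ {f : ℤ →+ ZMod N // f (n i) = 0} :=
      (ZMod.lift (n i)).symm
    have e2 : {f : ℤ →+ ZMod N // f (n i) = 0} ≃ {x : ZMod N // (n i) • x = 0} := by
      refine (Equiv.subtypeEquiv (zmultiplesHom (ZMod N)) fun x => ?_).symm
      rw [zmultiplesHom_apply, natCast_zsmul]
    rw [Nat.card_congr (e1.trans e2), card_torsion_zmod (n i) N (hdvd i) hN]
  rw [Nat.card_congr (E1.trans E2), Nat.card_pi]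
  have hcardL : Nat.card L = ∏ i, n i := by
    rw [Nat.card_congr (e.toEquiv.trans (DFinsupp.equivFunOnFintype)), Nat.card_pi]
    exact Finset.prod_congr rfl fun i _ => Nat.card_zmod (n i)
  rw [hcardL]
  exact Finset.prod_congr rfl fun i _ => E3 i

end homcount

section keysec

variable (p a : ℕ) (K : Type*) [AddCommGroup K] [Finite K]

lemma zne (hp : p.Prime) : ((p ^ a : ℕ) : ZMod (p ^ (a + 1))) ≠ 0 := by
  rw [Ne, ZMod.natCast_eq_zero_iff]
  intro h
  have h1 := Nat.le_of_dvd (pow_pos hp.pos a) h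
  have h2 : p ^ a < p ^ (a + 1) := Nat.pow_lt_pow_succ hp.one_lt
  omega

lemma pa_mem_zmultiples (hp : p.Prime) (x : ZMod (p ^ (a + 1))) (hx : x ≠ 0) :
    ((p ^ a : ℕ) : ZMod (p ^ (a + 1))) ∈ AddSubgroup.zmultiples x := by
  haveI : NeZero (p ^ (a + 1)) := ⟨pow_ne_zero _ hp.ne_zero⟩
  have hord : addOrderOf x ∣ p ^ (a + 1) := by
    apply addOrderOf_dvd_of_nsmul_eq_zero
    rw [nsmul_eq_mul, ZMod.natCast_self, zero_mul]
  obtain ⟨s, hsle, hs⟩ := (Nat.dvd_prime_pow hp).mp hord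
  have hs1 : 1 ≤ s := by
    rcases Nat.eq_zero_or_pos s with h0 | h0
    · exfalso
      rw [h0, pow_zero] at hs
      exact hx (AddMonoid.addOrderOf_eq_one_iff.mp hs)
    · exact h0
  set y := p ^ (s - 1) • x with hy
  have hymem : AddSubgroup.zmultiples y ≤ AddSubgroup.zmultiples x := by
    rw [AddSubgroup.zmultiples_le]
    refine ⟨((p ^ (s - 1) : ℕ) : ℤ), ?_⟩
    show ((p ^ (s - 1) : ℕ) : ℤ) • x = y
    rw [natCast_zsmul]
  apply hymem
  have hpy : p • y = 0 := by
    rw [hy, smul_smul]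
    have hps : p * p ^ (s - 1) = p ^ s := by
      rw [← pow_succ']
      congr 1
      omega
    rw [hps, ← hs]
    exact addOrderOf_nsmul_eq_zero x
  have hyne : y ≠ 0 := by
    intro h0
    have hdvd : addOrderOf x ∣ p ^ (s - 1) := addOrderOf_dvd_of_nsmul_eq_zero (hy ▸ h0)
    rw [hs] at hdvd
    have h1 := Nat.le_of_dvd (pow_pos hp.pos _) hdvd
    have h2 : p ^ (s - 1) < p ^ s := Nat.pow_lt_pow_right hp.one_lt (by omega)
    omega
  have hNdvd : p ^ (a + 1) ∣ p * y.val := by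
    apply (ZMod.natCast_eq_zero_iff _ _).mp
    push_cast
    rw [ZMod.natCast_val, ZMod.cast_id, ← nsmul_eq_mul]
    exact hpy
  have hpady : p ^ a ∣ y.val := by
    obtain ⟨c, hc⟩ := hNdvd
    refine ⟨c, ?_⟩
    apply Nat.eq_of_mul_eq_mul_left hp.pos
    rw [hc, pow_succ']
    ring
  obtain ⟨c, hc⟩ := hpady
  have hc0 : c ≠ 0 := by
    intro h
    apply hyne
    have hv : y.val = 0 := by rw [hc, h, mul_zero]
    rwa [ZMod.val_eq_zero] at hv
  have hclt : c < p := by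
    have h1 : y.val < p ^ (a + 1) := ZMod.val_lt y
    rw [hc, pow_succ] at h1
    exact lt_of_mul_lt_mul_left h1 (Nat.zero_le _)
  have hcop : ¬ p ∣ c := fun hdvd =>
    absurd (Nat.le_of_dvd (Nat.pos_of_ne_zero hc0) hdvd) (not_le.mpr hclt)
  have hbez : IsCoprime (c : ℤ) (p : ℤ) := by
    rw [Int.isCoprime_iff_gcd_eq_one, Int.gcd_natCast_natCast]
    exact Nat.Coprime.symm (hp.coprime_iff_not_dvd.mpr hcop)
  obtain ⟨u, v, huv⟩ := hbez
  refine AddSubgroup.mem_zmultiples_iff.mpr ⟨u, ?_⟩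
  have hycast : y = ((p ^ a * c : ℕ) : ZMod (p ^ (a + 1))) := by
    rw [← hc, ZMod.natCast_val, ZMod.cast_id]
  rw [hycast, zsmul_eq_mul]
  have hkey : (u * (p ^ a * c) : ℤ) = p ^ a - v * p ^ (a + 1) := by
    have h5 : (p : ℤ) ^ (a + 1) = p ^ a * p := by ring
    rw [h5]
    linear_combination ((p : ℤ) ^ a) * huv
  have hzero : ((p : ZMod (p ^ (a + 1)))) ^ (a + 1) = 0 := by
    have h6 := ZMod.natCast_self (p ^ (a + 1))
    push_cast at h6
    exact h6
  calc (u : ZMod (p ^ (a + 1))) * ((p ^ a * c : ℕ) : ZMod (p ^ (a + 1)))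
      = ((u * (p ^ a * c) : ℤ) : ZMod (p ^ (a + 1))) := by push_cast; ring
    _ = ((p ^ a - v * p ^ (a + 1) : ℤ) : ZMod (p ^ (a + 1))) := by rw [hkey]
    _ = ((p ^ a : ℕ) : ZMod (p ^ (a + 1))) := by push_cast; rw [hzero]; ring

lemma key (hp : p.Prime) (j : ℕ) (hj : 1 ≤ j) (hK : ∀ x : K, p ^ a • x = 0) :
    Np p (ZMod (p ^ (a + 1)) × K) j
      = Np p (ZMod (p ^ a) × K) (j - 1) + p ^ j * Np p K j := by
  haveI : NeZero (p ^ (a + 1)) := ⟨pow_ne_zero _ hp.ne_zero⟩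
  haveI : NeZero (p ^ a) := ⟨pow_ne_zero _ hp.ne_zero⟩
  set G := ZMod (p ^ (a + 1)) × K with hG
  set G' := ZMod (p ^ a) × K with hG'
  set z : G := (((p ^ a : ℕ) : ZMod (p ^ (a + 1))), 0) with hz
  set φ : G →+ G' :=
    (ZMod.castHom (pow_dvd_pow p (Nat.le_succ a)) (ZMod (p ^ a))).toAddMonoidHom.prodMap
      (AddMonoidHom.id K) with hφ
  have hφs : Function.Surjective φ := by
    rintro ⟨y, k⟩
    obtain ⟨n, rfl⟩ := ZMod.natCast_zmod_surjective y
    refine ⟨((n : ZMod (p ^ (a + 1))), k), Prod.ext ?_ rfl⟩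
    show (ZMod.castHom (pow_dvd_pow p (Nat.le_succ a)) (ZMod (p ^ a)))
        ((n : ZMod (p ^ (a + 1)))) = ((n : ZMod (p ^ a)))
    exact map_natCast _ n
  have hφz : φ z = 0 := by
    have : (ZMod.castHom (pow_dvd_pow p (Nat.le_succ a)) (ZMod (p ^ a)))
        ((p ^ a : ℕ) : ZMod (p ^ (a + 1))) = 0 := by
      rw [map_natCast, ZMod.natCast_self]
    exact Prod.ext this rfl
  have hpj : p ^ j = p * p ^ (j - 1) := by
    rw [← pow_succ']
    congr 1
    omega
  have hkcard : Nat.card φ.ker = p := by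
    have h1 : Nat.card G = Nat.card G' * Nat.card φ.ker := by
      rw [AddSubgroup.card_eq_card_quotient_mul_card_addSubgroup φ.ker,
        Nat.card_congr (QuotientAddGroup.quotientKerEquivOfSurjective φ hφs).toEquiv]
    have h2 : Nat.card G = p ^ (a + 1) * Nat.card K := by
      rw [hG, Nat.card_prod, Nat.card_zmod]
    have h3 : Nat.card G' = p ^ a * Nat.card K := by
      rw [hG', Nat.card_prod, Nat.card_zmod]
    have hK0 : 0 < Nat.card K := Nat.card_pos
    rw [h2, h3] at h1
    have e1 : p ^ a * Nat.card K * p = p ^ a * Nat.card K * Nat.card φ.ker := by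
      rw [← h1, pow_succ]
      ring
    exact (Nat.eq_of_mul_eq_mul_left (Nat.mul_pos (pow_pos hp.pos a) hK0) e1).symm
  have hker : φ.ker = AddSubgroup.zmultiples z := by
    have hle : AddSubgroup.zmultiples z ≤ φ.ker := AddSubgroup.zmultiples_le.mpr hφz
    refine (AddSubgroup.eq_of_le_of_card_ge hle ?_).symm
    rw [hkcard, Nat.card_zmultiples]
    have ho1 : addOrderOf ((p ^ a : ℕ) : ZMod (p ^ (a + 1))) = p := by
      rw [ZMod.addOrderOf_coe _ (pow_ne_zero _ hp.ne_zero),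
        Nat.gcd_eq_right (pow_dvd_pow p (Nat.le_succ a)), pow_succ,
        Nat.mul_div_cancel_left _ (pow_pos hp.pos a)]
    have ho : addOrderOf z = p := by
      rw [hz, Prod.addOrderOf_mk, addOrderOf_zero, Nat.lcm_one_right, ho1]
    rw [ho]
  have hmemker : ∀ H : AddSubgroup G, (φ.ker ≤ H ↔ z ∈ H) := by
    intro H
    rw [hker, AddSubgroup.zmultiples_le]
  have hcount1 : Nat.card {H : AddSubgroup G // Nat.card H = p ^ j ∧ z ∈ H}
      = Np p G' (j - 1) := by
    apply Nat.card_congr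
    refine ⟨fun H => ⟨H.1.map φ, ?_⟩, fun L => ⟨L.1.comap φ, ?_, ?_⟩, ?_, ?_⟩
    · -- card of image
      have hcm : (H.1.map φ).comap φ = H.1 := by
        rw [AddSubgroup.comap_map_eq]
        exact sup_eq_left.mpr ((hmemker H.1).mpr H.2.2)
      have hc1 : Nat.card ((H.1.map φ).comap φ) = Nat.card H.1 :=
        congrArg (fun S : AddSubgroup G => Nat.card S) hcm
      have hc2 := card_comap_of_surjective φ hφs (H.1.map φ)
      have hc3 : p * p ^ (j - 1) = p * Nat.card (H.1.map φ) := by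
        calc p * p ^ (j - 1) = p ^ j := hpj.symm
          _ = Nat.card H.1 := H.2.1.symm
          _ = Nat.card ((H.1.map φ).comap φ) := hc1.symm
          _ = Nat.card φ.ker * Nat.card (H.1.map φ) := hc2
          _ = p * Nat.card (H.1.map φ) := by rw [hkcard]
      exact (Nat.eq_of_mul_eq_mul_left hp.pos hc3).symm
    · -- card of preimage
      rw [card_comap_of_surjective φ hφs L.1, hkcard, L.2, ← hpj]
    · -- z mem preimage
      show φ z ∈ L.1
      rw [hφz]
      exact zero_mem _
    · intro H
      apply Subtype.ext
      show (H.1.map φ).comap φ = H.1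
      rw [AddSubgroup.comap_map_eq]
      exact sup_eq_left.mpr ((hmemker H.1).mpr H.2.2)
    · intro L
      apply Subtype.ext
      show (L.1.comap φ).map φ = L.1
      exact AddSubgroup.map_comap_eq_self_of_surjective hφs L.1
  have hcount2 : Nat.card {H : AddSubgroup G // Nat.card H = p ^ j ∧ ¬ z ∈ H}
      = p ^ j * Np p K j := by
    haveI : ∀ L : AddSubgroup K, Finite (↥L →+ ZMod (p ^ (a + 1))) := fun L =>
      Finite.of_injective (fun f => (f : ↥L → ZMod (p ^ (a + 1)))) DFunLike.coe_injective
    let gr : ∀ L : AddSubgroup K, (↥L →+ ZMod (p ^ (a + 1))) → AddSubgroup G :=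
      fun L f => (f.prod L.subtype).range
    have hgrinj : ∀ (L : AddSubgroup K) (f : ↥L →+ ZMod (p ^ (a + 1))),
        Function.Injective (f.prod L.subtype) := by
      intro L f x y hxy
      exact Subtype.ext (congrArg Prod.snd hxy)
    have hgrcard : ∀ L f, Nat.card (gr L f) = Nat.card L := fun L f =>
      (Nat.card_congr (AddMonoidHom.ofInjective (hgrinj L f)).toEquiv).symm
    have hgrz : ∀ L f, z ∉ gr L f := by
      rintro L f ⟨l, hl⟩
      have h2 : l.val = 0 := congrArg Prod.snd hl
      have h1 : f l = ((p ^ a : ℕ) : ZMod (p ^ (a + 1))) := congrArg Prod.fst hl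
      rw [show l = 0 from Subtype.ext h2, map_zero] at h1
      exact zne p a hp h1.symm
    have main : Nat.card {H : AddSubgroup G // Nat.card H = p ^ j ∧ ¬ z ∈ H}
        = Nat.card (Σ L : {L : AddSubgroup K // Nat.card L = p ^ j},
            (↥L.1 →+ ZMod (p ^ (a + 1)))) := by
      refine (Nat.card_congr (Equiv.ofBijective
        (fun X => ⟨gr X.1.1 X.2, by rw [hgrcard]; exact X.1.2, hgrz _ _⟩) ⟨?_, ?_⟩)).symm
      · rintro ⟨⟨L1, h1⟩, f1⟩ ⟨⟨L2, h2⟩, f2⟩ hEq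
        have hgr : gr L1 f1 = gr L2 f2 := congrArg Subtype.val hEq
        have hL : L1 = L2 := by
          apply le_antisymm
          · intro l hl
            have hmem : ((f1 ⟨l, hl⟩, l) : G) ∈ gr L2 f2 := by
              rw [← hgr]; exact ⟨⟨l, hl⟩, rfl⟩
            obtain ⟨l2, hl2⟩ := hmem
            have hc : (l2 : K) = l := congrArg Prod.snd hl2
            exact hc ▸ l2.2
          · intro l hl
            have hmem : ((f2 ⟨l, hl⟩, l) : G) ∈ gr L1 f1 := by
              rw [hgr]; exact ⟨⟨l, hl⟩, rfl⟩
            obtain ⟨l2, hl2⟩ := hmem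
            have hc : (l2 : K) = l := congrArg Prod.snd hl2
            exact hc ▸ l2.2
        subst hL
        have hf : f1 = f2 := by
          ext l
          have hmem : ((f1 l, l.val) : G) ∈ gr L1 f2 := by
            rw [← hgr]; exact ⟨l, rfl⟩
          obtain ⟨l2, hl2⟩ := hmem
          have hsnd : l2 = l := Subtype.ext (congrArg Prod.snd hl2)
          subst hsnd
          exact (congrArg Prod.fst hl2).symm
        subst hf
        rfl
      · rintro ⟨H, hHcard, hHz⟩
        have hinj0 : ∀ x : ZMod (p ^ (a + 1)), ((x, (0 : K)) : G) ∈ H → x = 0 := by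
          intro x hxH
          by_contra hx0
          apply hHz
          obtain ⟨u, hu⟩ :=
            AddSubgroup.mem_zmultiples_iff.mp (pa_mem_zmultiples p a hp x hx0)
          have hzu : z = u • ((x, (0 : K)) : G) := by
            have hi : z = (AddMonoidHom.inl (ZMod (p ^ (a + 1))) K)
                ((p ^ a : ℕ) : ZMod (p ^ (a + 1))) := rfl
            rw [hi, ← hu, map_zsmul]
            rfl
          rw [hzu]
          exact AddSubgroup.zsmul_mem H hxH u
        set L := H.map (AddMonoidHom.snd (ZMod (p ^ (a + 1))) K) with hLdef
        have hmemL : ∀ x : ↥H, ((x : G).2 ∈ L) := fun x =>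
          AddSubgroup.mem_map.mpr ⟨x.1, x.2, rfl⟩
        set ψ : ↥H →+ ↥L := AddMonoidHom.codRestrict
          ((AddMonoidHom.snd (ZMod (p ^ (a + 1))) K).comp H.subtype) L hmemL with hψdef
        have hψbij : Function.Bijective ψ := by
          constructor
          · intro x y hxy
            have h2 : (x : G).2 = (y : G).2 := congrArg Subtype.val hxy
            have hdmem : (((x : G).1 - (y : G).1, (0 : K)) : G) ∈ H := by
              have hsub : (x : G) - (y : G) = (((x : G).1 - (y : G).1, (0 : K)) : G) :=
                Prod.ext rfl (by show (x : G).2 - (y : G).2 = 0; rw [h2, sub_self])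
              rw [← hsub]
              exact sub_mem x.2 y.2
            have hfst : (x : G).1 = (y : G).1 := sub_eq_zero.mp (hinj0 _ hdmem)
            exact Subtype.ext (Prod.ext hfst h2)
          · rintro ⟨l, hl⟩
            obtain ⟨g, hgH, hgl⟩ := AddSubgroup.mem_map.mp hl
            exact ⟨⟨g, hgH⟩, Subtype.ext hgl⟩
        set E := AddEquiv.ofBijective ψ hψbij with hEdef
        set f : ↥L →+ ZMod (p ^ (a + 1)) :=
          (AddMonoidHom.fst (ZMod (p ^ (a + 1))) K).comp
            (H.subtype.comp E.symm.toAddMonoidHom) with hfdef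
        have hLcard : Nat.card L = p ^ j := by
          rw [← hHcard]
          exact (Nat.card_congr E.toEquiv).symm
        refine ⟨⟨⟨L, hLcard⟩, f⟩, ?_⟩
        apply Subtype.ext
        show gr L f = H
        apply le_antisymm
        · rintro w ⟨l, rfl⟩
          have h1 : E (E.symm l) = l := E.apply_symm_apply l
          have h2 : ((E.symm l : ↥H) : G).2 = (l : K) := congrArg Subtype.val h1
          have h3 : (f.prod L.subtype) l = ((E.symm l : ↥H) : G) := Prod.ext rfl h2.symm
          rw [h3]
          exact (E.symm l).2
        · intro g hg
          refine ⟨E ⟨g, hg⟩, ?_⟩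
          have h1 : E.symm (E ⟨g, hg⟩) = ⟨g, hg⟩ := E.symm_apply_apply _
          refine Prod.ext ?_ ?_
          · show f (E ⟨g, hg⟩) = g.1
            show ((H.subtype (E.symm (E ⟨g, hg⟩))) : G).1 = g.1
            rw [h1]
            rfl
          · show ((E ⟨g, hg⟩ : ↥L) : K) = g.2
            rfl
    have hfib : ∀ L : {L : AddSubgroup K // Nat.card L = p ^ j},
        Nat.card (↥L.1 →+ ZMod (p ^ (a + 1))) = p ^ j := by
      intro L
      have hLexp : ∀ x : ↥L.1, (p ^ (a + 1)) • x = 0 := by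
        intro x
        have h0 : L.1.subtype ((p ^ a) • x) = L.1.subtype 0 := by
          rw [map_nsmul, map_zero]
          exact hK x
        have h0' : (p ^ a) • x = 0 := Subtype.coe_injective h0
        calc (p ^ (a + 1)) • x = (p * p ^ a) • x :=
              congrArg (fun n : ℕ => n • x) (by ring)
          _ = p • ((p ^ a) • x) := (mul_smul p (p ^ a) x)
          _ = 0 := by rw [h0', smul_zero]
      rw [card_hom_zmod (p ^ (a + 1)) (pow_ne_zero _ hp.ne_zero) hLexp, L.2]
    rw [main, card_sigma_const hfib]
    rfl
  have hsplit := card_split (fun H : AddSubgroup G => Nat.card H = p ^ j) (fun H => z ∈ H)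
  have hNp : Np p G j = Nat.card {H : AddSubgroup G // Nat.card H = p ^ j} := rfl
  rw [hNp, hsplit, hcount1, hcount2]

end keysec

/-- `Nk p l k` is the number of subgroups of order `p^k` of the abelian `p`-group
`G_λ(p) = ℤ/p^{λ_1}ℤ × ⋯ × ℤ/p^{λ_n}ℤ`, where `λ` is given by the list `l`. -/
noncomputable def Nk (p : ℕ) (l : List ℕ) (k : ℕ) : ℕ :=
  Nat.card {H : AddSubgroup (∀ i : Fin l.length, ZMod (p ^ l.get i)) // Nat.card H = p ^ k}

lemma Nk_eq_Np (p : ℕ) (l : List ℕ) (k : ℕ) :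
    Nk p l k = Np p (∀ i : Fin l.length, ZMod (p ^ l.get i)) k := rfl

/-- Splitting off the head of the list. -/
def consAddEquiv (p x : ℕ) (l : List ℕ) :
    (∀ i : Fin (l.length + 1), ZMod (p ^ (x :: l).get i)) ≃+
      ZMod (p ^ x) × ∀ i : Fin l.length, ZMod (p ^ l.get i) where
  toFun f := (f 0, fun i => f i.succ)
  invFun g := Fin.cons g.1 g.2
  left_inv f := by
    funext i
    refine Fin.cases ?_ (fun k => ?_) i
    · exact Fin.cons_zero _ _
    · exact Fin.cons_succ _ _ _
  right_inv g := rfl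
  map_add' f g := rfl

/-- For a partition `λ = (λ_1, …, λ_n)` with `n ≥ 1`, letting
`λ̃ = (λ_1 + 1, λ_2, …, λ_n)` and `λ' = (λ_2, …, λ_n)`, one has for all `j ≥ 1`:
`N_j(λ̃) = N_{j−1}(λ) + p^j N_j(λ')`. -/
theorem stmt_13 (p : ℕ) (hp : p.Prime) (a : ℕ) (t : List ℕ)
    (hsort : (a :: t).Pairwise (· ≥ ·)) (hpos : ∀ x ∈ a :: t, 0 < x)
    (j : ℕ) (hj : 1 ≤ j) :
    Nk p ((a + 1) :: t) j = Nk p (a :: t) (j - 1) + p ^ j * Nk p t j := by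
  haveI : ∀ (l : List ℕ) (i : Fin l.length), NeZero (p ^ l.get i) :=
    fun l i => ⟨pow_ne_zero _ hp.ne_zero⟩
  set K := ∀ i : Fin t.length, ZMod (p ^ t.get i) with hKdef
  haveI : Finite K := by
    haveI : ∀ i : Fin t.length, NeZero (p ^ t.get i) := fun i => ⟨pow_ne_zero _ hp.ne_zero⟩
    infer_instance
  have hK : ∀ x : K, p ^ a • x = 0 := by
    intro x
    funext i
    have ht : t.get i ≤ a := (List.pairwise_cons.mp hsort).1 _ (t.get_mem _)
    have hdvd : p ^ t.get i ∣ p ^ a := pow_dvd_pow p ht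
    show p ^ a • x i = 0
    rw [nsmul_eq_mul, Nat.cast_pow]
    have : ((p : ZMod (p ^ t.get i)) ^ a) = 0 := by
      have := (ZMod.natCast_eq_zero_iff (p ^ a) (p ^ t.get i)).mpr hdvd
      rwa [Nat.cast_pow] at this
    rw [this, zero_mul]
  have h1 : Nk p ((a + 1) :: t) j
      = Np p (∀ i : Fin (t.length + 1), ZMod (p ^ (((a+1) :: t).get i))) j := rfl
  have h2 : Nk p (a :: t) (j - 1)
      = Np p (∀ i : Fin (t.length + 1), ZMod (p ^ ((a :: t).get i))) (j - 1) := rfl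
  rw [h1, h2, Nk_eq_Np,
    Np_congr p j (consAddEquiv p (a + 1) t), Np_congr p (j - 1) (consAddEquiv p a t)]
  exact key p a K hp j hj hK
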